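/- Under the Viscous Setup, suppose additionally that ω ∈ C_c^∞(ℝ) with support contained in [0,b), and let φ : (0,∞) → ℝ be twice continuously differentiable. Then, writing φ for φ(ρ(t,r)) and φ_r = φ'(ρ)ρ_r, the following identity holds: ε∫₀^T∫_a^b φ''(ρ)ρ_r² ω(r)² r^{n−1} dr dt = −∫_a^b [φ(ρ(T,r)) − φ(ρ(0,r))] ω(r)² r^{n−1} dr + ∫₀^T∫_a^b (φ(ρ) − ρφ'(ρ)) u_r ω(r)² r^{n−1} dr dt + 2∫₀^T∫_a^b φ(ρ) u ω(r) ω_r(r) r^{n−1} dr dt + ∫₀^T∫_a^b ((n−1)/r)(φ(ρ) − ρφ'(ρ)) u ω(r)² r^{n−1} dr dt − 2ε∫₀^T∫_a^b φ'(ρ)ρ_r ω(r) ω_r(r) r^{n−1} dr dt. -/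

import Mathlib

open MeasureTheory Real Set

noncomputable section

/-- spatial partial derivative of a function of two real variables (uncurried form) -/
def pd2 (F : ℝ × ℝ → ℝ) : ℝ × ℝ → ℝ := fun p => fderiv ℝ F p (0, 1)
/-- time partial derivative -/
def pd1 (F : ℝ × ℝ → ℝ) : ℝ × ℝ → ℝ := fun p => fderiv ℝ F p (1, 0)

lemma pd2_hasDerivAt {F : ℝ × ℝ → ℝ} (hF : ContDiff ℝ (⊤ : ℕ∞) F) (t r : ℝ) :
    HasDerivAt (fun y => F (t, y)) (pd2 F (t, r)) r := by
  have h1 : HasDerivAt (fun y : ℝ => ((t, y) : ℝ × ℝ)) ((0 : ℝ), (1 : ℝ)) r :=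
    (hasDerivAt_const r t).prodMk (hasDerivAt_id r)
  have h2 := (hF.differentiable (by simp) (t, r)).hasFDerivAt
  exact h2.comp_hasDerivAt r h1

lemma pd1_hasDerivAt {F : ℝ × ℝ → ℝ} (hF : ContDiff ℝ (⊤ : ℕ∞) F) (t r : ℝ) :
    HasDerivAt (fun s => F (s, r)) (pd1 F (t, r)) t := by
  have h1 : HasDerivAt (fun s : ℝ => ((s, r) : ℝ × ℝ)) ((1 : ℝ), (0 : ℝ)) t :=
    (hasDerivAt_id t).prodMk (hasDerivAt_const t r)
  have h2 := (hF.differentiable (by simp) (t, r)).hasFDerivAt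
  exact h2.comp_hasDerivAt t h1

lemma pd1_contDiff {F : ℝ × ℝ → ℝ} (hF : ContDiff ℝ (⊤ : ℕ∞) F) :
    ContDiff ℝ (⊤ : ℕ∞) (pd1 F) :=
  (hF.fderiv_right (by exact_mod_cast le_top)).clm_apply contDiff_const

lemma pd2_contDiff {F : ℝ × ℝ → ℝ} (hF : ContDiff ℝ (⊤ : ℕ∞) F) :
    ContDiff ℝ (⊤ : ℕ∞) (pd2 F) :=
  (hF.fderiv_right (by exact_mod_cast le_top)).clm_apply contDiff_const

lemma ftc_Ioo {f f' : ℝ → ℝ} {a b : ℝ} (hab : a ≤ b)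
    (hd : ∀ x ∈ Set.Icc a b, HasDerivAt f (f' x) x)
    (hc : ContinuousOn f' (Set.Icc a b)) :
    ∫ x in Set.Ioo a b, f' x = f b - f a := by
  rw [← MeasureTheory.integral_Ioc_eq_integral_Ioo, ← intervalIntegral.integral_of_le hab]
  exact intervalIntegral.integral_eq_sub_of_hasDerivAt
    (fun x hx => hd x (by rwa [Set.uIcc_of_le hab] at hx))
    ((hc.mono (by rw [Set.uIcc_of_le hab])).intervalIntegrable)

lemma integrableOn_Ioo_of_continuousOn {g : ℝ → ℝ} {a b : ℝ}
    (hg : ContinuousOn g (Set.Icc a b)) :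
    MeasureTheory.IntegrableOn g (Set.Ioo a b) :=
  (hg.integrableOn_compact isCompact_Icc).mono_set Set.Ioo_subset_Icc_self

lemma integrable_prod_Ioo {F : ℝ × ℝ → ℝ} {T a b : ℝ}
    (hF : ContinuousOn F (Set.Icc 0 T ×ˢ Set.Icc a b)) :
    MeasureTheory.Integrable F
      ((volume.restrict (Set.Ioo 0 T)).prod (volume.restrict (Set.Ioo a b))) := by
  rw [Measure.prod_restrict, ← Measure.volume_eq_prod]
  exact (hF.integrableOn_compact (isCompact_Icc.prod isCompact_Icc)).mono_set
    (Set.prod_mono Set.Ioo_subset_Icc_self Set.Ioo_subset_Icc_self)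

lemma intInt {X : ℝ → ℝ → ℝ} {T a b : ℝ}
    (hX : ContinuousOn (Function.uncurry X) (Set.Icc 0 T ×ˢ Set.Icc a b)) :
    MeasureTheory.Integrable (fun t => ∫ r in Set.Ioo a b, X t r)
      (volume.restrict (Set.Ioo 0 T)) :=
  (integrable_prod_Ioo hX).integral_prod_left

lemma swap_Ioo {f : ℝ → ℝ → ℝ} {T a b : ℝ}
    (hf : ContinuousOn (Function.uncurry f) (Set.Icc 0 T ×ˢ Set.Icc a b)) :
    ∫ t in Set.Ioo 0 T, ∫ r in Set.Ioo a b, f t r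
      = ∫ r in Set.Ioo a b, ∫ t in Set.Ioo 0 T, f t r :=
  MeasureTheory.integral_integral_swap (integrable_prod_Ioo hf)

lemma cont_slice {X : ℝ → ℝ → ℝ} {T a b : ℝ}
    (hX : ContinuousOn (Function.uncurry X) (Set.Icc 0 T ×ˢ Set.Icc a b))
    {t : ℝ} (ht : t ∈ Set.Icc 0 T) : ContinuousOn (X t) (Set.Icc a b) :=
  hX.comp (Continuous.continuousOn (continuous_const.prodMk continuous_id))
    (fun r hr => ⟨ht, hr⟩)

lemma key_algebra (ε nn r S S2 ρv mv ρr ρt mr ρrr w w' fv f1 f2 : ℝ)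
    (hr : r ≠ 0) (hρ : ρv ≠ 0) (hS : S = r * S2)
    (hcont : S * ρt + (nn * S2 * mv + S * mr) = ε * (nn * S2 * ρr + S * ρrr)) :
    ε * (f2 * ρr ^ 2 * w ^ 2 * S)
      = -(f1 * ρt * w ^ 2 * S)
        + (fv - ρv * f1) * ((mr * ρv - mv * ρr) / ρv ^ 2) * w ^ 2 * S
        + 2 * (fv * (mv / ρv) * w * w' * S)
        + (nn / r) * (fv - ρv * f1) * (mv / ρv) * w ^ 2 * S
        - 2 * ε * (f1 * ρr * w * w' * S)
        + ((ε * (f2 * ρr ^ 2 + f1 * ρrr) - f1 * ρr * (mv / ρv)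
              - fv * ((mr * ρv - mv * ρr) / ρv ^ 2)) * w ^ 2 * S
            + (ε * f1 * ρr - fv * (mv / ρv)) * (2 * w * w' * S + w ^ 2 * nn * S2)) := by
  subst hS
  field_simp
  linear_combination (f1 * w ^ 2 * ρv ^ 2) * hcont

set_option maxHeartbeats 2000000 in
theorem continuity_renormalized_identity
    (n : ℕ) (hn : 2 ≤ n) (γ : ℝ) (hγ : 1 < γ)
    (T ε δ a b ρbar cε : ℝ) (hT : 0 < T) (hε : 0 < ε) (hδ : 0 < δ)
    (ha0 : 0 < a) (ha1 : a < 1) (hb : 1 < b) (hρbar : 0 < ρbar) (hcε : 0 < cε)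
    (ρ m : ℝ → ℝ → ℝ)
    (hρ_smooth : ContDiff ℝ (⊤ : ℕ∞) (Function.uncurry ρ))
    (hm_smooth : ContDiff ℝ (⊤ : ℕ∞) (Function.uncurry m))
    (hpos : ∀ t ∈ Set.Icc 0 T, ∀ r ∈ Set.Icc a b, cε ≤ ρ t r)
    (continuity_eq : ∀ t ∈ Set.Ioo 0 T, ∀ r ∈ Set.Ioo a b,
      r ^ (n - 1) * deriv (fun s => ρ s r) t + deriv (fun y => y ^ (n - 1) * m t y) r
        = ε * deriv (fun y => y ^ (n - 1) * deriv (fun z => ρ t z) y) r)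
    (bc_ρr : ∀ t ∈ Set.Icc 0 T, deriv (fun y => ρ t y) a = 0)
    (bc_ma : ∀ t ∈ Set.Icc 0 T, m t a = 0)
    (bc_ρb : ∀ t ∈ Set.Icc 0 T, ρ t b = ρbar)
    (bc_mb : ∀ t ∈ Set.Icc 0 T, m t b = 0)
    (ω : ℝ → ℝ) (hω_smooth : ContDiff ℝ (⊤ : ℕ∞) ω) (hω_supp : HasCompactSupport ω)
    (hω_sub : Function.support ω ⊆ Set.Ico 0 b)
    (φ : ℝ → ℝ) (hφ : ContDiffOn ℝ 2 φ (Set.Ioi 0)) :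
    ε * ∫ t in Set.Ioo 0 T, ∫ r in Set.Ioo a b,
        deriv (deriv φ) (ρ t r) * (deriv (fun y => ρ t y) r) ^ (2:ℕ)
          * (ω r) ^ (2:ℕ) * r ^ (n - 1)
    = -(∫ r in Set.Ioo a b, (φ (ρ T r) - φ (ρ 0 r)) * (ω r) ^ (2:ℕ) * r ^ (n - 1))
      + (∫ t in Set.Ioo 0 T, ∫ r in Set.Ioo a b,
          (φ (ρ t r) - ρ t r * deriv φ (ρ t r))
            * deriv (fun y => m t y / ρ t y) r * (ω r) ^ (2:ℕ) * r ^ (n - 1))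
      + 2 * (∫ t in Set.Ioo 0 T, ∫ r in Set.Ioo a b,
          φ (ρ t r) * (m t r / ρ t r) * ω r * deriv ω r * r ^ (n - 1))
      + (∫ t in Set.Ioo 0 T, ∫ r in Set.Ioo a b,
          ((n - 1 : ℝ) / r) * (φ (ρ t r) - ρ t r * deriv φ (ρ t r))
            * (m t r / ρ t r) * (ω r) ^ (2:ℕ) * r ^ (n - 1))
      - 2 * ε * (∫ t in Set.Ioo 0 T, ∫ r in Set.Ioo a b,
          deriv φ (ρ t r) * deriv (fun y => ρ t y) r * ω r * deriv ω r * r ^ (n - 1)) := by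
  have hab : a ≤ b := by linarith
  have h0T : (0:ℝ) ≤ T := hT.le
  have hn1 : 1 ≤ n := by omega
  -- partial derivative rewriting
  have hdr : ∀ t r : ℝ, deriv (fun y => ρ t y) r = pd2 (Function.uncurry ρ) (t, r) :=
    fun t r => (pd2_hasDerivAt hρ_smooth t r).deriv
  have hdt : ∀ t r : ℝ, deriv (fun s => ρ s r) t = pd1 (Function.uncurry ρ) (t, r) :=
    fun t r => (pd1_hasDerivAt hρ_smooth t r).deriv
  simp only [hdr]
  set K : Set (ℝ × ℝ) := Set.Icc 0 T ×ˢ Set.Icc a b with hK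
  have hposK : ∀ p ∈ K, 0 < ρ p.1 p.2 := fun p hp =>
    lt_of_lt_of_le hcε (hpos p.1 hp.1 p.2 hp.2)
  have hneK : ∀ p ∈ K, ρ p.1 p.2 ≠ 0 := fun p hp => (hposK p hp).ne'
  -- φ facts
  have hφ2 : ContDiffOn ℝ 1 (deriv φ) (Set.Ioi (0:ℝ)) :=
    hφ.deriv_of_isOpen isOpen_Ioi (by norm_num)
  have hφc : ContinuousOn φ (Set.Ioi (0:ℝ)) := hφ.continuousOn
  have hφ'c : ContinuousOn (deriv φ) (Set.Ioi (0:ℝ)) := hφ2.continuousOn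
  have hφ''c : ContinuousOn (deriv (deriv φ)) (Set.Ioi (0:ℝ)) :=
    hφ2.continuousOn_deriv_of_isOpen isOpen_Ioi (le_refl 1)
  have hφd : ∀ x ∈ Set.Ioi (0:ℝ), HasDerivAt φ (deriv φ x) x := fun x hx =>
    ((hφ.differentiableOn (by norm_num)).differentiableAt (isOpen_Ioi.mem_nhds hx)).hasDerivAt
  have hφd' : ∀ x ∈ Set.Ioi (0:ℝ), HasDerivAt (deriv φ) (deriv (deriv φ) x) x := fun x hx =>
    ((hφ2.differentiableOn (by norm_num)).differentiableAt (isOpen_Ioi.mem_nhds hx)).hasDerivAt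
  -- ω facts
  have hωd : ∀ x : ℝ, HasDerivAt ω (deriv ω x) x := fun x =>
    ((hω_smooth.differentiable (by simp)) x).hasDerivAt
  have hωc : Continuous ω := hω_smooth.continuous
  have hω'c : Continuous (deriv ω) := hω_smooth.continuous_deriv (by exact_mod_cast le_top)
  have hωb : ω b = 0 := by
    by_contra h
    exact lt_irrefl b (hω_sub (Function.mem_support.mpr h)).2
  -- named partial derivatives
  set ρr : ℝ × ℝ → ℝ := pd2 (Function.uncurry ρ) with hρrdef
  set ρt : ℝ × ℝ → ℝ := pd1 (Function.uncurry ρ) with hρtdef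
  set mr : ℝ × ℝ → ℝ := pd2 (Function.uncurry m) with hmrdef
  set ρrr : ℝ × ℝ → ℝ := pd2 ρr with hρrrdef
  -- the nice integrands
  set A : ℝ → ℝ → ℝ := fun t r =>
    deriv (deriv φ) (ρ t r) * ρr (t, r) ^ 2 * ω r ^ 2 * r ^ (n - 1) with hA
  set B : ℝ → ℝ → ℝ := fun t r =>
    deriv φ (ρ t r) * ρt (t, r) * ω r ^ 2 * r ^ (n - 1) with hB
  set C : ℝ → ℝ → ℝ := fun t r =>
    (φ (ρ t r) - ρ t r * deriv φ (ρ t r))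
      * ((mr (t, r) * ρ t r - m t r * ρr (t, r)) / ρ t r ^ 2) * ω r ^ 2 * r ^ (n - 1) with hC
  set D : ℝ → ℝ → ℝ := fun t r =>
    φ (ρ t r) * (m t r / ρ t r) * ω r * deriv ω r * r ^ (n - 1) with hD
  set E : ℝ → ℝ → ℝ := fun t r =>
    ((n : ℝ) - 1) / r * (φ (ρ t r) - ρ t r * deriv φ (ρ t r))
      * (m t r / ρ t r) * ω r ^ 2 * r ^ (n - 1) with hE
  set F : ℝ → ℝ → ℝ := fun t r =>
    deriv φ (ρ t r) * ρr (t, r) * ω r * deriv ω r * r ^ (n - 1) with hF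
  set G : ℝ → ℝ → ℝ := fun t r =>
    (ε * (deriv (deriv φ) (ρ t r) * ρr (t, r) ^ 2 + deriv φ (ρ t r) * ρrr (t, r))
        - deriv φ (ρ t r) * ρr (t, r) * (m t r / ρ t r)
        - φ (ρ t r) * ((mr (t, r) * ρ t r - m t r * ρr (t, r)) / ρ t r ^ 2)) * ω r ^ 2
          * r ^ (n - 1)
      + (ε * deriv φ (ρ t r) * ρr (t, r) - φ (ρ t r) * (m t r / ρ t r))
          * (2 * ω r * deriv ω r * r ^ (n - 1) + ω r ^ 2 * ((n : ℝ) - 1) * r ^ (n - 2)) with hG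
  -- cast and exponent facts
  have hcast : ((n - 1 : ℕ) : ℝ) = (n : ℝ) - 1 := by
    rw [Nat.cast_sub hn1]; norm_num
  have hexp : n - 1 - 1 = n - 2 := by omega
  -- the pointwise identity
  have keyPt : ∀ t ∈ Set.Ioo 0 T, ∀ r ∈ Set.Ioo a b,
      ε * A t r = -(B t r) + C t r + 2 * (D t r) + E t r - 2 * ε * (F t r) + G t r := by
    intro t ht r hr
    have htI : t ∈ Set.Icc 0 T := Set.Ioo_subset_Icc_self ht
    have hrI : r ∈ Set.Icc a b := Set.Ioo_subset_Icc_self hr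
    have hρpos : 0 < ρ t r := hposK (t, r) ⟨htI, hrI⟩
    have hrne : r ≠ 0 := by
      have : 0 < r := lt_trans ha0 hr.1
      exact this.ne'
    have hc := continuity_eq t ht r hr
    rw [hdt] at hc
    have hdm : deriv (fun y => y ^ (n - 1) * m t y) r
        = ↑(n - 1) * r ^ (n - 1 - 1) * m t r + r ^ (n - 1) * mr (t, r) :=
      ((hasDerivAt_pow (n - 1) r).mul (pd2_hasDerivAt hm_smooth t r)).deriv
    have hdrr : deriv (fun y => y ^ (n - 1) * deriv (fun z => ρ t z) y) r
        = ↑(n - 1) * r ^ (n - 1 - 1) * ρr (t, r) + r ^ (n - 1) * ρrr (t, r) := by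
      have heq : (fun y => y ^ (n - 1) * deriv (fun z => ρ t z) y)
          = fun y => y ^ (n - 1) * ρr (t, y) := by
        funext y; rw [hdr]
      rw [heq]
      exact ((hasDerivAt_pow (n - 1) r).mul
        (pd2_hasDerivAt (pd2_contDiff hρ_smooth) t r)).deriv
    rw [hdm, hdrr, hexp, hcast] at hc
    have hS : r ^ (n - 1) = r * r ^ (n - 2) := by
      have h3 : n - 1 = (n - 2) + 1 := by omega
      rw [h3, pow_succ']
    have hc' : r ^ (n - 1) * ρt (t, r)
        + (((n : ℝ) - 1) * r ^ (n - 2) * m t r + r ^ (n - 1) * mr (t, r))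
        = ε * (((n : ℝ) - 1) * r ^ (n - 2) * ρr (t, r) + r ^ (n - 1) * ρrr (t, r)) := by
      linarith [hc]
    exact key_algebra ε ((n : ℝ) - 1) r (r ^ (n - 1)) (r ^ (n - 2)) (ρ t r) (m t r)
      (ρr (t, r)) (ρt (t, r)) (mr (t, r)) (ρrr (t, r)) (ω r) (deriv ω r)
      (φ (ρ t r)) (deriv φ (ρ t r)) (deriv (deriv φ) (ρ t r)) hrne hρpos.ne' hS hc'
  -- continuity atoms on K
  have cR : Continuous (fun p : ℝ × ℝ => ρ p.1 p.2) := hρ_smooth.continuous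
  have cM : Continuous (fun p : ℝ × ℝ => m p.1 p.2) := hm_smooth.continuous
  have pr2 : Continuous (fun p : ℝ × ℝ => (p.1, p.2)) := continuous_fst.prodMk continuous_snd
  have cρr : Continuous (fun p : ℝ × ℝ => ρr (p.1, p.2)) :=
    (pd2_contDiff hρ_smooth).continuous.comp pr2
  have cρt : Continuous (fun p : ℝ × ℝ => ρt (p.1, p.2)) :=
    (pd1_contDiff hρ_smooth).continuous.comp pr2
  have cmr : Continuous (fun p : ℝ × ℝ => mr (p.1, p.2)) :=
    (pd2_contDiff hm_smooth).continuous.comp pr2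
  have cρrr : Continuous (fun p : ℝ × ℝ => ρrr (p.1, p.2)) :=
    (pd2_contDiff (pd2_contDiff hρ_smooth)).continuous.comp pr2
  have mapsK : Set.MapsTo (fun p : ℝ × ℝ => ρ p.1 p.2) K (Set.Ioi 0) :=
    fun p hp => hposK p hp
  have cφρ : ContinuousOn (fun p : ℝ × ℝ => φ (ρ p.1 p.2)) K :=
    hφc.comp cR.continuousOn mapsK
  have cφ'ρ : ContinuousOn (fun p : ℝ × ℝ => deriv φ (ρ p.1 p.2)) K :=
    hφ'c.comp cR.continuousOn mapsK
  have cφ''ρ : ContinuousOn (fun p : ℝ × ℝ => deriv (deriv φ) (ρ p.1 p.2)) K :=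
    hφ''c.comp cR.continuousOn mapsK
  have cu : ContinuousOn (fun p : ℝ × ℝ => m p.1 p.2 / ρ p.1 p.2) K :=
    cM.continuousOn.div cR.continuousOn hneK
  have cur : ContinuousOn (fun p : ℝ × ℝ =>
      (mr (p.1, p.2) * ρ p.1 p.2 - m p.1 p.2 * ρr (p.1, p.2)) / ρ p.1 p.2 ^ 2) K :=
    ((cmr.continuousOn.mul cR.continuousOn).sub
      (cM.continuousOn.mul cρr.continuousOn)).div (cR.continuousOn.pow 2)
      (fun p hp => pow_ne_zero 2 (hneK p hp))
  have cω : Continuous (fun p : ℝ × ℝ => ω p.2) := hωc.comp continuous_snd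
  have cω' : Continuous (fun p : ℝ × ℝ => deriv ω p.2) := hω'c.comp continuous_snd
  have cpow1 : Continuous (fun p : ℝ × ℝ => p.2 ^ (n - 1)) := continuous_snd.pow (n - 1)
  have cpow2 : Continuous (fun p : ℝ × ℝ => p.2 ^ (n - 2)) := continuous_snd.pow (n - 2)
  have hr2ne : ∀ p ∈ K, (p.2 : ℝ) ≠ 0 := fun p hp => (lt_of_lt_of_le ha0 hp.2.1).ne'
  have cinv : ContinuousOn (fun p : ℝ × ℝ => ((n : ℝ) - 1) / p.2) K :=
    continuousOn_const.div continuous_snd.continuousOn hr2ne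
  -- continuity of integrands
  have contB : ContinuousOn (Function.uncurry B) K := by
    show ContinuousOn (fun p : ℝ × ℝ =>
      deriv φ (ρ p.1 p.2) * ρt (p.1, p.2) * ω p.2 ^ 2 * p.2 ^ (n - 1)) K
    exact ((cφ'ρ.mul cρt.continuousOn).mul (cω.pow 2).continuousOn).mul cpow1.continuousOn
  have contC : ContinuousOn (Function.uncurry C) K := by
    show ContinuousOn (fun p : ℝ × ℝ =>
      (φ (ρ p.1 p.2) - ρ p.1 p.2 * deriv φ (ρ p.1 p.2))
        * ((mr (p.1, p.2) * ρ p.1 p.2 - m p.1 p.2 * ρr (p.1, p.2)) / ρ p.1 p.2 ^ 2)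
        * ω p.2 ^ 2 * p.2 ^ (n - 1)) K
    exact (((cφρ.sub (cR.continuousOn.mul cφ'ρ)).mul cur).mul
      (cω.pow 2).continuousOn).mul cpow1.continuousOn
  have contD : ContinuousOn (Function.uncurry D) K := by
    show ContinuousOn (fun p : ℝ × ℝ =>
      φ (ρ p.1 p.2) * (m p.1 p.2 / ρ p.1 p.2) * ω p.2 * deriv ω p.2 * p.2 ^ (n - 1)) K
    exact (((cφρ.mul cu).mul cω.continuousOn).mul cω'.continuousOn).mul cpow1.continuousOn
  have contE : ContinuousOn (Function.uncurry E) K := by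
    show ContinuousOn (fun p : ℝ × ℝ =>
      ((n : ℝ) - 1) / p.2 * (φ (ρ p.1 p.2) - ρ p.1 p.2 * deriv φ (ρ p.1 p.2))
        * (m p.1 p.2 / ρ p.1 p.2) * ω p.2 ^ 2 * p.2 ^ (n - 1)) K
    exact (((cinv.mul (cφρ.sub (cR.continuousOn.mul cφ'ρ))).mul cu).mul
      (cω.pow 2).continuousOn).mul cpow1.continuousOn
  have contF : ContinuousOn (Function.uncurry F) K := by
    show ContinuousOn (fun p : ℝ × ℝ =>
      deriv φ (ρ p.1 p.2) * ρr (p.1, p.2) * ω p.2 * deriv ω p.2 * p.2 ^ (n - 1)) K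
    exact (((cφ'ρ.mul cρr.continuousOn).mul cω.continuousOn).mul
      cω'.continuousOn).mul cpow1.continuousOn
  have contG : ContinuousOn (Function.uncurry G) K := by
    show ContinuousOn (fun p : ℝ × ℝ =>
      (ε * (deriv (deriv φ) (ρ p.1 p.2) * ρr (p.1, p.2) ^ 2
            + deriv φ (ρ p.1 p.2) * ρrr (p.1, p.2))
          - deriv φ (ρ p.1 p.2) * ρr (p.1, p.2) * (m p.1 p.2 / ρ p.1 p.2)
          - φ (ρ p.1 p.2) * ((mr (p.1, p.2) * ρ p.1 p.2 - m p.1 p.2 * ρr (p.1, p.2))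
              / ρ p.1 p.2 ^ 2)) * ω p.2 ^ 2 * p.2 ^ (n - 1)
        + (ε * deriv φ (ρ p.1 p.2) * ρr (p.1, p.2) - φ (ρ p.1 p.2) * (m p.1 p.2 / ρ p.1 p.2))
            * (2 * ω p.2 * deriv ω p.2 * p.2 ^ (n - 1)
              + ω p.2 ^ 2 * ((n : ℝ) - 1) * p.2 ^ (n - 2))) K
    exact ((((continuousOn_const.mul ((cφ''ρ.mul (cρr.continuousOn.pow 2)).add
        (cφ'ρ.mul cρrr.continuousOn))).sub
        ((cφ'ρ.mul cρr.continuousOn).mul cu)).sub (cφρ.mul cur)).mul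
        (cω.pow 2).continuousOn).mul cpow1.continuousOn |>.add
      ((((continuousOn_const.mul cφ'ρ).mul cρr.continuousOn).sub (cφρ.mul cu)).mul
        (((continuousOn_const.mul cω.continuousOn).mul cω'.continuousOn).mul
            cpow1.continuousOn |>.add
          (((cω.pow 2).continuousOn.mul continuousOn_const).mul cpow2.continuousOn)))
  -- integrability
  have intOn : ∀ (X : ℝ → ℝ → ℝ), ContinuousOn (Function.uncurry X) K →
      ∀ t ∈ Set.Icc 0 T, MeasureTheory.IntegrableOn (X t) (Set.Ioo a b) := by
    intro X hX t ht
    apply integrableOn_Ioo_of_continuousOn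
    exact hX.comp (Continuous.continuousOn (continuous_const.prodMk continuous_id))
      (fun r hr => ⟨ht, hr⟩)
  -- the flux term integrates to zero
  have fluxZero : ∀ t ∈ Set.Ioo 0 T, (∫ r in Set.Ioo a b, G t r) = 0 := by
    intro t ht
    have htI : t ∈ Set.Icc 0 T := Set.Ioo_subset_Icc_self ht
    have hflux : ∀ y ∈ Set.Icc a b,
        HasDerivAt (fun y => (ε * deriv φ (ρ t y) * ρr (t, y) - φ (ρ t y) * (m t y / ρ t y))
          * ω y ^ 2 * y ^ (n - 1)) (G t y) y := by
      intro y hy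
      have hρpos : 0 < ρ t y := hposK (t, y) ⟨htI, hy⟩
      have hρd : HasDerivAt (fun y => ρ t y) (ρr (t, y)) y := pd2_hasDerivAt hρ_smooth t y
      have h3 : HasDerivAt (fun y => ρr (t, y)) (ρrr (t, y)) y :=
        pd2_hasDerivAt (pd2_contDiff hρ_smooth) t y
      have h1 : HasDerivAt (fun y => φ (ρ t y)) (deriv φ (ρ t y) * ρr (t, y)) y :=
        (hφd _ hρpos).comp y hρd
      have h2 : HasDerivAt (fun y => deriv φ (ρ t y))
          (deriv (deriv φ) (ρ t y) * ρr (t, y)) y := (hφd' _ hρpos).comp y hρd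
      have h4 : HasDerivAt (fun y => m t y / ρ t y)
          ((mr (t, y) * ρ t y - m t y * ρr (t, y)) / ρ t y ^ 2) y :=
        (pd2_hasDerivAt hm_smooth t y).div hρd hρpos.ne'
      have h5 : HasDerivAt (fun y => ω y ^ 2) (2 * ω y ^ 1 * deriv ω y) y := by
        simpa using (hωd y).fun_pow 2
      have h6 : HasDerivAt (fun y : ℝ => y ^ (n - 1)) (((n : ℝ) - 1) * y ^ (n - 2)) y := by
        have h := hasDerivAt_pow (n - 1) y
        rwa [hexp, hcast] at h
      have hP : HasDerivAt (fun y => ε * deriv φ (ρ t y) * ρr (t, y)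
          - φ (ρ t y) * (m t y / ρ t y))
          ((ε * (deriv (deriv φ) (ρ t y) * ρr (t, y)) * ρr (t, y)
            + ε * deriv φ (ρ t y) * ρrr (t, y))
          - (deriv φ (ρ t y) * ρr (t, y) * (m t y / ρ t y)
            + φ (ρ t y) * ((mr (t, y) * ρ t y - m t y * ρr (t, y)) / ρ t y ^ 2))) y :=
        ((h2.const_mul ε).mul h3).sub (h1.mul h4)
      have htot := (hP.fun_mul h5).fun_mul h6
      refine htot.congr_deriv ?_
      simp only [hG]
      ring
    have hGcont : ContinuousOn (G t) (Set.Icc a b) := cont_slice contG htI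
    rw [ftc_Ioo hab hflux hGcont]
    have hρra : ρr (t, a) = 0 := by rw [← hdr]; exact bc_ρr t htI
    simp [hωb, hρra, bc_ma t htI]
  -- the time FTC
  have timeFTC : ∀ r ∈ Set.Ioo a b, (∫ t in Set.Ioo 0 T, B t r)
      = (φ (ρ T r) - φ (ρ 0 r)) * ω r ^ 2 * r ^ (n - 1) := by
    intro r hr
    have hrI : r ∈ Set.Icc a b := Set.Ioo_subset_Icc_self hr
    have hd : ∀ t ∈ Set.Icc 0 T, HasDerivAt (fun t => φ (ρ t r) * (ω r ^ 2 * r ^ (n - 1)))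
        ((deriv φ (ρ t r) * ρt (t, r)) * (ω r ^ 2 * r ^ (n - 1))) t := by
      intro t ht
      have hρpos : 0 < ρ t r := hposK (t, r) ⟨ht, hrI⟩
      exact ((hφd _ hρpos).comp t (pd1_hasDerivAt hρ_smooth t r)).mul_const _
    have hcont : ContinuousOn
        (fun t => (deriv φ (ρ t r) * ρt (t, r)) * (ω r ^ 2 * r ^ (n - 1)))
        (Set.Icc 0 T) := by
      have c1 : ContinuousOn (fun t : ℝ => deriv φ (ρ t r)) (Set.Icc 0 T) :=
        hφ'c.comp (cR.comp (continuous_id.prodMk continuous_const)).continuousOn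
          (fun t ht => hposK (t, r) ⟨ht, hrI⟩)
      have c2 : Continuous (fun t : ℝ => ρt (t, r)) :=
        (pd1_contDiff hρ_smooth).continuous.comp (continuous_id.prodMk continuous_const)
      exact (c1.mul c2.continuousOn).mul continuousOn_const
    calc (∫ t in Set.Ioo 0 T, B t r)
        = ∫ t in Set.Ioo 0 T, (deriv φ (ρ t r) * ρt (t, r)) * (ω r ^ 2 * r ^ (n - 1)) :=
          MeasureTheory.setIntegral_congr_fun measurableSet_Ioo
            (fun t _ => by simp only [hB]; ring)
      _ = φ (ρ T r) * (ω r ^ 2 * r ^ (n - 1)) - φ (ρ 0 r) * (ω r ^ 2 * r ^ (n - 1)) :=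
          ftc_Ioo h0T hd hcont
      _ = (φ (ρ T r) - φ (ρ 0 r)) * ω r ^ 2 * r ^ (n - 1) := by ring
  -- rewrite the u_r term in the goal
  have eqC : (∫ t in Set.Ioo 0 T, ∫ r in Set.Ioo a b,
      (φ (ρ t r) - ρ t r * deriv φ (ρ t r))
        * deriv (fun y => m t y / ρ t y) r * (ω r) ^ (2:ℕ) * r ^ (n - 1))
      = ∫ t in Set.Ioo 0 T, ∫ r in Set.Ioo a b, C t r := by
    apply MeasureTheory.setIntegral_congr_fun measurableSet_Ioo
    intro t ht
    apply MeasureTheory.setIntegral_congr_fun measurableSet_Ioo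
    intro r hr
    have hρpos : 0 < ρ t r :=
      hposK (t, r) ⟨Set.Ioo_subset_Icc_self ht, Set.Ioo_subset_Icc_self hr⟩
    have h4 : HasDerivAt (fun y => m t y / ρ t y)
        ((mr (t, r) * ρ t r - m t r * ρr (t, r)) / ρ t r ^ 2) r :=
      (pd2_hasDerivAt hm_smooth t r).div (pd2_hasDerivAt hρ_smooth t r) hρpos.ne'
    simp only [hC]
    rw [h4.deriv]
  rw [eqC]
  -- splitting the inner integral
  have e2 : ∀ t ∈ Set.Ioo 0 T, (∫ r in Set.Ioo a b, ε * A t r)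
      = -(∫ r in Set.Ioo a b, B t r) + (∫ r in Set.Ioo a b, C t r)
        + 2 * (∫ r in Set.Ioo a b, D t r) + (∫ r in Set.Ioo a b, E t r)
        - 2 * ε * (∫ r in Set.Ioo a b, F t r) := by
    intro t ht
    have htI : t ∈ Set.Icc 0 T := Set.Ioo_subset_Icc_self ht
    have iB := intOn B contB t htI
    have iC := intOn C contC t htI
    have iD := intOn D contD t htI
    have iE := intOn E contE t htI
    have iF := intOn F contF t htI
    have iG := intOn G contG t htI
    have i4 : MeasureTheory.IntegrableOn
        (fun r => -B t r + C t r + 2 * D t r + E t r) (Set.Ioo a b) := by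
      exact ((iB.neg.add iC).add (iD.const_mul 2)).add iE
    have i5 : MeasureTheory.IntegrableOn
        (fun r => -B t r + C t r + 2 * D t r + E t r - 2 * ε * F t r) (Set.Ioo a b) := by
      exact i4.sub (iF.const_mul (2 * ε))
    calc (∫ r in Set.Ioo a b, ε * A t r)
        = ∫ r in Set.Ioo a b,
            (-B t r + C t r + 2 * D t r + E t r - 2 * ε * F t r) + G t r :=
          MeasureTheory.setIntegral_congr_fun measurableSet_Ioo
            (fun r hr => keyPt t ht r hr)
      _ = (∫ r in Set.Ioo a b, -B t r + C t r + 2 * D t r + E t r - 2 * ε * F t r)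
            + ∫ r in Set.Ioo a b, G t r := MeasureTheory.integral_add i5 iG
      _ = ∫ r in Set.Ioo a b, -B t r + C t r + 2 * D t r + E t r - 2 * ε * F t r := by
          rw [fluxZero t ht, add_zero]
      _ = (∫ r in Set.Ioo a b, -B t r + C t r + 2 * D t r + E t r)
            - ∫ r in Set.Ioo a b, 2 * ε * F t r :=
          MeasureTheory.integral_sub i4 (iF.const_mul (2 * ε))
      _ = ((∫ r in Set.Ioo a b, -B t r + C t r + 2 * D t r)
            + ∫ r in Set.Ioo a b, E t r) - ∫ r in Set.Ioo a b, 2 * ε * F t r := by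
          rw [MeasureTheory.integral_add (by exact (iB.neg.add iC).add (iD.const_mul 2)) iE]
      _ = (((∫ r in Set.Ioo a b, -B t r + C t r) + ∫ r in Set.Ioo a b, 2 * D t r)
            + ∫ r in Set.Ioo a b, E t r) - ∫ r in Set.Ioo a b, 2 * ε * F t r := by
          rw [MeasureTheory.integral_add (by exact iB.neg.add iC) (iD.const_mul 2)]
      _ = ((((∫ r in Set.Ioo a b, -B t r) + ∫ r in Set.Ioo a b, C t r)
            + ∫ r in Set.Ioo a b, 2 * D t r)
            + ∫ r in Set.Ioo a b, E t r) - ∫ r in Set.Ioo a b, 2 * ε * F t r := by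
          rw [MeasureTheory.integral_add (by exact iB.neg) iC]
      _ = -(∫ r in Set.Ioo a b, B t r) + (∫ r in Set.Ioo a b, C t r)
            + 2 * (∫ r in Set.Ioo a b, D t r) + (∫ r in Set.Ioo a b, E t r)
            - 2 * ε * (∫ r in Set.Ioo a b, F t r) := by
          rw [MeasureTheory.integral_neg, MeasureTheory.integral_const_mul,
            MeasureTheory.integral_const_mul]
  -- integrability of the inner integrals in t
  have jB := intInt contB
  have jC := intInt contC
  have jD := intInt contD
  have jE := intInt contE
  have jF := intInt contF
  have j4 : MeasureTheory.Integrable (fun t => -(∫ r in Set.Ioo a b, B t r)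
      + (∫ r in Set.Ioo a b, C t r) + 2 * (∫ r in Set.Ioo a b, D t r)
      + (∫ r in Set.Ioo a b, E t r)) (volume.restrict (Set.Ioo 0 T)) := by
    exact ((jB.neg.add jC).add (jD.const_mul 2)).add jE
  -- the swapped and FTC'd B term
  have eB : (∫ t in Set.Ioo 0 T, ∫ r in Set.Ioo a b, B t r)
      = ∫ r in Set.Ioo a b, (φ (ρ T r) - φ (ρ 0 r)) * ω r ^ 2 * r ^ (n - 1) :=
    (swap_Ioo contB).trans (MeasureTheory.setIntegral_congr_fun measurableSet_Ioo
      (fun r hr => timeFTC r hr))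
  -- final assembly
  calc ε * (∫ t in Set.Ioo 0 T, ∫ r in Set.Ioo a b, A t r)
      = ∫ t in Set.Ioo 0 T, ∫ r in Set.Ioo a b, ε * A t r := by
        rw [← MeasureTheory.integral_const_mul]
        exact MeasureTheory.setIntegral_congr_fun measurableSet_Ioo
          (fun t _ => (MeasureTheory.integral_const_mul ε _).symm)
    _ = ∫ t in Set.Ioo 0 T, (-(∫ r in Set.Ioo a b, B t r) + (∫ r in Set.Ioo a b, C t r)
          + 2 * (∫ r in Set.Ioo a b, D t r) + (∫ r in Set.Ioo a b, E t r)
          - 2 * ε * (∫ r in Set.Ioo a b, F t r)) :=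
        MeasureTheory.setIntegral_congr_fun measurableSet_Ioo (fun t ht => e2 t ht)
    _ = (∫ t in Set.Ioo 0 T, (-(∫ r in Set.Ioo a b, B t r) + (∫ r in Set.Ioo a b, C t r)
          + 2 * (∫ r in Set.Ioo a b, D t r) + (∫ r in Set.Ioo a b, E t r)))
          - ∫ t in Set.Ioo 0 T, 2 * ε * (∫ r in Set.Ioo a b, F t r) :=
        MeasureTheory.integral_sub j4 (jF.const_mul (2 * ε))
    _ = (((∫ t in Set.Ioo 0 T, (-(∫ r in Set.Ioo a b, B t r) + (∫ r in Set.Ioo a b, C t r)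
          + 2 * (∫ r in Set.Ioo a b, D t r))))
          + ∫ t in Set.Ioo 0 T, ∫ r in Set.Ioo a b, E t r)
          - ∫ t in Set.Ioo 0 T, 2 * ε * (∫ r in Set.Ioo a b, F t r) := by
        rw [MeasureTheory.integral_add (by exact (jB.neg.add jC).add (jD.const_mul 2)) jE]
    _ = ((((∫ t in Set.Ioo 0 T, (-(∫ r in Set.Ioo a b, B t r) + (∫ r in Set.Ioo a b, C t r)))
          + ∫ t in Set.Ioo 0 T, 2 * (∫ r in Set.Ioo a b, D t r)))
          + ∫ t in Set.Ioo 0 T, ∫ r in Set.Ioo a b, E t r)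
          - ∫ t in Set.Ioo 0 T, 2 * ε * (∫ r in Set.Ioo a b, F t r) := by
        rw [MeasureTheory.integral_add (by exact jB.neg.add jC) (jD.const_mul 2)]
    _ = (((((∫ t in Set.Ioo 0 T, -(∫ r in Set.Ioo a b, B t r))
          + ∫ t in Set.Ioo 0 T, ∫ r in Set.Ioo a b, C t r)
          + ∫ t in Set.Ioo 0 T, 2 * (∫ r in Set.Ioo a b, D t r)))
          + ∫ t in Set.Ioo 0 T, ∫ r in Set.Ioo a b, E t r)
          - ∫ t in Set.Ioo 0 T, 2 * ε * (∫ r in Set.Ioo a b, F t r) := by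
        rw [MeasureTheory.integral_add (by exact jB.neg) jC]
    _ = -(∫ t in Set.Ioo 0 T, ∫ r in Set.Ioo a b, B t r)
          + (∫ t in Set.Ioo 0 T, ∫ r in Set.Ioo a b, C t r)
          + 2 * (∫ t in Set.Ioo 0 T, ∫ r in Set.Ioo a b, D t r)
          + (∫ t in Set.Ioo 0 T, ∫ r in Set.Ioo a b, E t r)
          - 2 * ε * (∫ t in Set.Ioo 0 T, ∫ r in Set.Ioo a b, F t r) := by
        rw [MeasureTheory.integral_neg, MeasureTheory.integral_const_mul,
          MeasureTheory.integral_const_mul]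
    _ = -(∫ r in Set.Ioo a b, (φ (ρ T r) - φ (ρ 0 r)) * ω r ^ 2 * r ^ (n - 1))
          + (∫ t in Set.Ioo 0 T, ∫ r in Set.Ioo a b, C t r)
          + 2 * (∫ t in Set.Ioo 0 T, ∫ r in Set.Ioo a b, D t r)
          + (∫ t in Set.Ioo 0 T, ∫ r in Set.Ioo a b, E t r)
          - 2 * ε * (∫ t in Set.Ioo 0 T, ∫ r in Set.Ioo a b, F t r) := by rw [eB]

end
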